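/- Let K be a Hilbert space, A, B bounded operators on K. In H = K ⊕ K consider the systems of four subspaces S_A = (H; K⊕0, 0⊕K, graph A, diagonal) and S_B likewise. Then S_A and S_B are isomorphic as systems of four subspaces if and only if A and B are similar. -/

import Mathlib

variable {K : Type*} [NormedAddCommGroup K] [InnerProductSpace ℂ K] [CompleteSpace K]

/-- The system of four subspaces `(K ⊕ 0, 0 ⊕ K, graph A, diagonal)` in `H = K ⊕₂ K`
associated with a bounded operator `A` on `K`. -/
noncomputable def fourSubspaceSystem (A : K →L[ℂ] K) : Fin 4 → Submodule ℂ (WithLp 2 (K × K)) :=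
  ![Submodule.comap (WithLp.linearEquiv 2 ℂ (K × K)).toLinearMap (Submodule.prod ⊤ ⊥),
    Submodule.comap (WithLp.linearEquiv 2 ℂ (K × K)).toLinearMap (Submodule.prod ⊥ ⊤),
    Submodule.comap (WithLp.linearEquiv 2 ℂ (K × K)).toLinearMap
      (LinearMap.graph (A : K →ₗ[ℂ] K)),
    Submodule.comap (WithLp.linearEquiv 2 ℂ (K × K)).toLinearMap
      (LinearMap.graph (LinearMap.id (R := ℂ) (M := K)))]

/-- Isomorphism of systems of four subspaces: a bounded invertible operator carrying each
subspace onto the corresponding one. -/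
def FourSystemIso (E F : Fin 4 → Submodule ℂ (WithLp 2 (K × K))) : Prop :=
  ∃ φ : WithLp 2 (K × K) ≃L[ℂ] WithLp 2 (K × K),
    ∀ i, Submodule.map (φ.toLinearEquiv.toLinearMap) (E i) = F i

lemma mem_fourSubspaceSystem_zero (A : K →L[ℂ] K) (z : WithLp 2 (K × K)) :
    z ∈ fourSubspaceSystem A 0 ↔ (WithLp.equiv 2 (K × K) z).2 = 0 := by
  simp [fourSubspaceSystem, Submodule.mem_prod]

lemma mem_fourSubspaceSystem_one (A : K →L[ℂ] K) (z : WithLp 2 (K × K)) :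
    z ∈ fourSubspaceSystem A 1 ↔ (WithLp.equiv 2 (K × K) z).1 = 0 := by
  simp [fourSubspaceSystem, Submodule.mem_prod]

lemma mem_fourSubspaceSystem_two (A : K →L[ℂ] K) (z : WithLp 2 (K × K)) :
    z ∈ fourSubspaceSystem A 2 ↔ A (WithLp.equiv 2 (K × K) z).1 = (WithLp.equiv 2 (K × K) z).2 := by
  simp [fourSubspaceSystem, LinearMap.mem_graph_iff, eq_comm]

lemma mem_fourSubspaceSystem_three (A : K →L[ℂ] K) (z : WithLp 2 (K × K)) :
    z ∈ fourSubspaceSystem A 3 ↔ (WithLp.equiv 2 (K × K) z).1 = (WithLp.equiv 2 (K × K) z).2 := by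
  simp [fourSubspaceSystem, LinearMap.mem_graph_iff, eq_comm]

/-- The systems `S_A` and `S_B` of four subspaces are isomorphic iff the
operators `A` and `B` are similar. -/
theorem fourSubspaceSystem_iso_iff_similar (A B : K →L[ℂ] K) :
    FourSystemIso (fourSubspaceSystem A) (fourSubspaceSystem B) ↔
      ∃ W : K ≃L[ℂ] K, ∀ x, W (A x) = B (W x) := by
  set e : WithLp 2 (K × K) ≃L[ℂ] K × K := WithLp.prodContinuousLinearEquiv 2 ℂ K K with he
  constructor
  · rintro ⟨φ, hφ⟩
    -- membership transfer
    have hmem : ∀ (i : Fin 4) (z : WithLp 2 (K × K)),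
        z ∈ fourSubspaceSystem A i → φ z ∈ fourSubspaceSystem B i := by
      intro i z hz
      rw [← hφ i]
      exact ⟨z, hz, rfl⟩
    have hmem' : ∀ (i : Fin 4) (z : WithLp 2 (K × K)),
        z ∈ fourSubspaceSystem B i → φ.symm z ∈ fourSubspaceSystem A i := by
      intro i z hz
      rw [← hφ i] at hz
      obtain ⟨w, hw, rfl⟩ := hz
      simpa using hw
    -- the operator `W` and its candidate inverse
    set Wf : K →L[ℂ] K := (ContinuousLinearMap.fst ℂ K K).comp
      ((e : WithLp 2 (K × K) →L[ℂ] K × K).comp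
        ((φ : WithLp 2 (K × K) →L[ℂ] WithLp 2 (K × K)).comp
          ((e.symm : K × K →L[ℂ] WithLp 2 (K × K)).comp (ContinuousLinearMap.inl ℂ K K)))) with hWf
    set Wg : K →L[ℂ] K := (ContinuousLinearMap.fst ℂ K K).comp
      ((e : WithLp 2 (K × K) →L[ℂ] K × K).comp
        (((φ.symm : WithLp 2 (K × K) ≃L[ℂ] WithLp 2 (K × K)) :
            WithLp 2 (K × K) →L[ℂ] WithLp 2 (K × K)).comp
          ((e.symm : K × K →L[ℂ] WithLp 2 (K × K)).comp (ContinuousLinearMap.inl ℂ K K)))) with hWg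
    have hWf_apply : ∀ x : K, φ (e.symm (x, 0)) = e.symm (Wf x, 0) := by
      intro x
      have h0 : e.symm (x, 0) ∈ fourSubspaceSystem A 0 := by
        rw [mem_fourSubspaceSystem_zero]
        simp [he]
      have := hmem 0 _ h0
      rw [mem_fourSubspaceSystem_zero] at this
      apply e.injective
      simp only [ContinuousLinearEquiv.apply_symm_apply]
      ext
      · simp [hWf, he]
      · simpa [he] using this
    have hWg_apply : ∀ x : K, φ.symm (e.symm (x, 0)) = e.symm (Wg x, 0) := by
      intro x
      have h0 : e.symm (x, 0) ∈ fourSubspaceSystem B 0 := by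
        rw [mem_fourSubspaceSystem_zero]
        simp [he]
      have := hmem' 0 _ h0
      rw [mem_fourSubspaceSystem_zero] at this
      apply e.injective
      simp only [ContinuousLinearEquiv.apply_symm_apply]
      ext
      · simp [hWg, he]
      · simpa [he] using this
    have hleft : Function.LeftInverse Wg Wf := by
      intro x
      have : φ.symm (φ (e.symm (x, 0))) = e.symm (Wg (Wf x), 0) := by
        rw [hWf_apply, hWg_apply]
      rw [ContinuousLinearEquiv.symm_apply_apply] at this
      have := e.symm.injective this
      exact (Prod.ext_iff.mp this).1.symm
    have hright : Function.RightInverse Wg Wf := by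
      intro x
      have : φ (φ.symm (e.symm (x, 0))) = e.symm (Wf (Wg x), 0) := by
        rw [hWg_apply, hWf_apply]
      rw [ContinuousLinearEquiv.apply_symm_apply] at this
      have := e.symm.injective this
      exact (Prod.ext_iff.mp this).1.symm
    -- the second-coordinate operator equals `Wf` via the diagonal
    have hV_apply : ∀ y : K, ∃ v : K, φ (e.symm (0, y)) = e.symm (0, v) := by
      intro y
      have h1 : e.symm (0, y) ∈ fourSubspaceSystem A 1 := by
        rw [mem_fourSubspaceSystem_one]; simp [he]
      have := hmem 1 _ h1
      rw [mem_fourSubspaceSystem_one] at this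
      refine ⟨(e (φ (e.symm (0, y)))).2, ?_⟩
      apply e.injective
      simp only [ContinuousLinearEquiv.apply_symm_apply]
      ext
      · simpa [he] using this
      · rfl
    have hdiag : ∀ x : K, φ (e.symm (x, x)) = e.symm (Wf x, Wf x) := by
      intro x
      obtain ⟨v, hv⟩ := hV_apply x
      have hsplit : φ (e.symm (x, x)) = e.symm (Wf x, v) := by
        have : (x, x) = ((x : K), (0 : K)) + ((0 : K), x) := by simp
        rw [this, map_add, map_add, hWf_apply, hv, ← map_add]
        congr 1
        simp
      have h3 : e.symm (x, x) ∈ fourSubspaceSystem A 3 := by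
        rw [mem_fourSubspaceSystem_three]; simp [he]
      have := hmem 3 _ h3
      rw [mem_fourSubspaceSystem_three, hsplit] at this
      simp only [he] at this ⊢
      rw [hsplit]
      have hv' : Wf x = v := by simpa [he] using this
      rw [hv']
    -- similarity from the graph condition
    refine ⟨ContinuousLinearEquiv.equivOfInverse Wf Wg hleft hright, ?_⟩
    intro x
    have h2 : e.symm (x, A x) ∈ fourSubspaceSystem A 2 := by
      rw [mem_fourSubspaceSystem_two]; simp [he]
    have hφ2 := hmem 2 _ h2
    have hsplit : φ (e.symm (x, A x)) = e.symm (Wf x, Wf (A x)) := by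
      have hxy : ((x : K), A x) = ((x : K), x) + ((0 : K), A x - x) := by simp
      obtain ⟨v, hv⟩ := hV_apply (A x - x)
      have hv2 : v = Wf (A x - x) := by
        have h1 := hdiag (A x - x)
        have h2' : φ (e.symm (A x - x, A x - x)) =
            e.symm (Wf (A x - x), 0) + e.symm (0, v) := by
          have : ((A x - x : K), (A x - x : K)) = ((A x - x : K), (0:K)) + ((0:K), A x - x) := by
            simp
          rw [this, map_add, map_add, hWf_apply, hv]
        rw [h1, ← map_add] at h2'
        have := e.symm.injective h2'
        simpa using ((Prod.ext_iff.mp this).2).symm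
      rw [hxy, map_add, map_add, hdiag, hv, hv2, ← map_add]
      congr 1
      ext <;> simp [map_sub]
    rw [mem_fourSubspaceSystem_two, hsplit] at hφ2
    have : B (Wf x) = Wf (A x) := by simpa [he] using hφ2
    simpa using this.symm
  · rintro ⟨W, hW⟩
    refine ⟨e.trans ((W.prodCongr W).trans e.symm), ?_⟩
    intro i
    ext z
    rw [Submodule.mem_map]
    have key : ∀ w : WithLp 2 (K × K),
        (e.trans ((W.prodCongr W).trans e.symm)) w =
          e.symm (W (e w).1, W (e w).2) := fun w => rfl
    constructor
    · rintro ⟨w, hw, rfl⟩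
      have hz : (e.trans ((W.prodCongr W).trans e.symm)).toLinearEquiv.toLinearMap w
          = e.symm (W (e w).1, W (e w).2) := rfl
      rw [hz]
      fin_cases i
      · have hw' := (mem_fourSubspaceSystem_zero A w).mp hw
        refine (mem_fourSubspaceSystem_zero B _).mpr ?_
        simp only [he] at hw' ⊢
        simp [WithLp.equiv] at hw'
        simp [hw']
      · have hw' := (mem_fourSubspaceSystem_one A w).mp hw
        refine (mem_fourSubspaceSystem_one B _).mpr ?_
        simp only [he] at hw' ⊢
        simp [WithLp.equiv] at hw'
        simp [hw']
      · have hw' := (mem_fourSubspaceSystem_two A w).mp hw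
        refine (mem_fourSubspaceSystem_two B _).mpr ?_
        simp only [he] at hw' ⊢
        simp [WithLp.equiv] at hw'
        simp [← hw', hW]
      · have hw' := (mem_fourSubspaceSystem_three A w).mp hw
        refine (mem_fourSubspaceSystem_three B _).mpr ?_
        simp only [he] at hw' ⊢
        simp [WithLp.equiv] at hw'
        simp [hw']
    · intro hz
      refine ⟨e.symm (W.symm (e z).1, W.symm (e z).2), ?_, ?_⟩
      · fin_cases i
        · have hz' := (mem_fourSubspaceSystem_zero B z).mp hz
          refine (mem_fourSubspaceSystem_zero A _).mpr ?_
          simp only [he] at hz' ⊢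
          simp [WithLp.equiv] at hz'
          simp [hz']
        · have hz' := (mem_fourSubspaceSystem_one B z).mp hz
          refine (mem_fourSubspaceSystem_one A _).mpr ?_
          simp only [he] at hz' ⊢
          simp [WithLp.equiv] at hz'
          simp [hz']
        · have hz' := (mem_fourSubspaceSystem_two B z).mp hz
          refine (mem_fourSubspaceSystem_two A _).mpr ?_
          simp only [he] at hz' ⊢
          simp only [WithLp.prodContinuousLinearEquiv_apply,
            WithLp.prodContinuousLinearEquiv_symm_apply, Equiv.apply_symm_apply] at hz' ⊢
          exact W.injective (by rw [hW]; simpa using hz')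
        · have hz' := (mem_fourSubspaceSystem_three B z).mp hz
          refine (mem_fourSubspaceSystem_three A _).mpr ?_
          simp only [he] at hz' ⊢
          simp [WithLp.equiv] at hz'
          simp [hz']
      · have : (e.trans ((W.prodCongr W).trans e.symm)).toLinearEquiv.toLinearMap
            (e.symm (W.symm (e z).1, W.symm (e z).2))
            = e.symm (W (W.symm (e z).1), W (W.symm (e z).2)) := rfl
        rw [this]
        simp
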